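/- Let β be defined for u⁴ < 1/2 by β(u) := (6 / (δ(u)² · (1 − u⁴)^{13/4})) · (−u + (1 − u⁴)^{1/4}) · (−1 + u⁴ + u·(1 − u⁴)^{3/4}) · (−1 + u³·(1 − u⁴)^{1/4} + u·(1 − u⁴)^{3/4}), where δ(u)² := (1 + u³·(1 − u⁴)^{−3/4})² + (1 − u³·(1 − u⁴)^{−3/4})², and set λ(u) := u · √(β(u)). Then: (i) for every u with u⁴ < 1/2, λ(u) = 0 if and only if u = 0; and (ii) λ is differentiable at 0 with λ′(0) = √3; in particular λ′(0) ≠ 0. -/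

import Mathlib

noncomputable def deltaSq (u : ℝ) : ℝ :=
  (1 + u ^ 3 * (1 - u ^ 4) ^ (-(3 : ℝ) / 4)) ^ 2 +
    (1 - u ^ 3 * (1 - u ^ 4) ^ (-(3 : ℝ) / 4)) ^ 2

noncomputable def beta (u : ℝ) : ℝ :=
  (6 / (deltaSq u * (1 - u ^ 4) ^ ((13 : ℝ) / 4))) *
    (-u + (1 - u ^ 4) ^ ((1 : ℝ) / 4)) *
    (-1 + u ^ 4 + u * (1 - u ^ 4) ^ ((3 : ℝ) / 4)) *
    (-1 + u ^ 3 * (1 - u ^ 4) ^ ((1 : ℝ) / 4) + u * (1 - u ^ 4) ^ ((3 : ℝ) / 4))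

noncomputable def lam (u : ℝ) : ℝ := u * Real.sqrt (beta u)

lemma deltaSq_pos (u : ℝ) : 0 < deltaSq u := by
  unfold deltaSq
  nlinarith [sq_nonneg (u ^ 3 * (1 - u ^ 4) ^ (-(3 : ℝ) / 4))]

lemma beta_pos {u : ℝ} (hu : u ^ 4 < 1 / 2) (hne : u ≠ 0) : 0 < beta u := by
  have h1 : (0:ℝ) < 1 - u ^ 4 := by nlinarith
  set A := (1 - u ^ 4) ^ ((1:ℝ)/4) with hA
  have hApos : 0 < A := Real.rpow_pos_of_pos h1 _
  have hA4 : A ^ 4 = 1 - u ^ 4 := by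
    rw [hA, ← Real.rpow_natCast ((1 - u ^ 4) ^ ((1:ℝ)/4)) 4, ← Real.rpow_mul h1.le]
    norm_num
  have h3 : (1 - u ^ 4) ^ ((3:ℝ)/4) = A ^ 3 := by
    rw [hA, ← Real.rpow_natCast ((1 - u ^ 4) ^ ((1:ℝ)/4)) 3, ← Real.rpow_mul h1.le]
    norm_num
  have h13 : (1 - u ^ 4) ^ ((13:ℝ)/4) = A ^ 13 := by
    rw [hA, ← Real.rpow_natCast ((1 - u ^ 4) ^ ((1:ℝ)/4)) 13, ← Real.rpow_mul h1.le]
    norm_num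
  have hbeta : beta u = 6 / (deltaSq u * A ^ 13) *
      ((A - u) ^ 2 * A ^ 3 * (1 - u ^ 3 * A - u * A ^ 3)) := by
    unfold beta
    rw [h3, h13, ← hA]
    have h4 : u ^ 4 = 1 - A ^ 4 := by rw [hA4]; ring
    rw [h4]; ring
  have hu2 : u ^ 2 < A ^ 2 := by
    nlinarith [sq_nonneg u, sq_nonneg (u^2 + A^2), sq_nonneg (u^2 - A^2),
      mul_pos hApos hApos]
  have hAu : 0 < A - u := by nlinarith [sq_nonneg (A + u)]
  have hupos : 0 < u ^ 2 := by positivity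
  have hst : u ^ 2 * A ^ 2 < 1 / 2 := by
    nlinarith [sq_nonneg (u^2 - A^2), mul_pos hupos (mul_pos hApos hApos)]
  have hF : 0 < 1 - u ^ 3 * A - u * A ^ 3 := by
    by_contra hcon
    push_neg at hcon
    have hX : 1 ≤ u ^ 3 * A + u * A ^ 3 := by linarith
    nlinarith [mul_le_mul hX hX (by linarith) (by linarith),
      mul_pos hupos (mul_pos hApos hApos), hst]
  rw [hbeta]
  exact mul_pos (div_pos (by norm_num) (mul_pos (deltaSq_pos u) (pow_pos hApos 13)))
    (mul_pos (mul_pos (pow_pos hAu 2) (pow_pos hApos 3)) hF)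

lemma beta_zero : beta 0 = 3 := by
  unfold beta deltaSq
  norm_num [Real.one_rpow]

lemma beta_contAt : ContinuousAt beta 0 := by
  have hb : ContinuousAt (fun u : ℝ => 1 - u ^ 4) 0 := by fun_prop
  have hne : (fun u : ℝ => 1 - u ^ 4) 0 ≠ 0 := by norm_num
  have hr : ∀ p : ℝ, ContinuousAt (fun u : ℝ => (1 - u ^ 4) ^ p) 0 :=
    fun p => hb.rpow_const (Or.inl hne)
  have hu3 : ContinuousAt (fun u : ℝ => u ^ 3) 0 := by fun_prop
  have hid : ContinuousAt (fun u : ℝ => u) 0 := by fun_prop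
  have hD : ContinuousAt deltaSq 0 := by
    unfold deltaSq
    exact ((continuousAt_const.add (hu3.mul (hr _))).pow 2).add
      ((continuousAt_const.sub (hu3.mul (hr _))).pow 2)
  have hden : ContinuousAt (fun u : ℝ => deltaSq u * (1 - u ^ 4) ^ ((13:ℝ)/4)) 0 :=
    hD.mul (hr _)
  have hdenne : deltaSq 0 * ((1:ℝ) - 0 ^ 4) ^ ((13:ℝ)/4) ≠ 0 := by
    norm_num [deltaSq, Real.one_rpow]
  unfold beta
  exact ((((continuousAt_const.div hden hdenne).mul
      ((hid.neg).add (hr _))).mul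
      ((continuousAt_const.add (hid.pow 4)).add (hid.mul (hr _)))).mul
      ((continuousAt_const.add (hu3.mul (hr _))).add (hid.mul (hr _))))

/-- `λ(u) = u √(β(u))` vanishes exactly at `u = 0` on the domain `u⁴ < 1/2`,
and `λ` is differentiable at `0` with `λ'(0) = √3 ≠ 0`. -/
theorem stmt11 :
    (∀ u : ℝ, u ^ 4 < 1 / 2 → (lam u = 0 ↔ u = 0)) ∧
      HasDerivAt lam (Real.sqrt 3) 0 ∧ deriv lam 0 ≠ 0 := by
  have hderiv : HasDerivAt lam (Real.sqrt 3) 0 := by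
    rw [hasDerivAt_iff_tendsto_slope]
    have hcont : ContinuousAt (fun u => Real.sqrt (beta u)) 0 :=
      Real.continuous_sqrt.continuousAt.comp beta_contAt
    have key : Filter.Tendsto (fun u => Real.sqrt (beta u)) (nhdsWithin 0 {(0:ℝ)}ᶜ)
        (nhds (Real.sqrt 3)) := by
      have := hcont.tendsto
      rw [beta_zero] at this
      exact this.mono_left nhdsWithin_le_nhds
    refine key.congr' ?_
    filter_upwards [self_mem_nhdsWithin] with u hu
    have hune : u ≠ 0 := hu
    simp only [slope_def_field, lam]
    field_simp
    ring
  refine ⟨?_, hderiv, ?_⟩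
  · intro u hu
    constructor
    · intro h
      by_contra hne
      have hb := beta_pos hu hne
      have : Real.sqrt (beta u) ≠ 0 := ne_of_gt (Real.sqrt_pos.mpr hb)
      exact hne (by simpa [lam, this] using h)
    · rintro rfl
      simp [lam]
  · rw [hderiv.deriv]
    exact ne_of_gt (Real.sqrt_pos.mpr (by norm_num))
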